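/- Performance difference lemma: for a discounted MDP with discount γ ∈ (0,1), any policy π, any utility function U : S × A → ℝ, and any function f : S × A → ℝ, the occupancy measure identity gives (1-γ)(f(s₀, π̂) - J_U(π)) = A_π(π̂, f) + E_{(s,a)∼d^π}[(f - T_U^{π̂} f)(s,a)], where A_π(π̂, f) = E_{(s,a)∼d^π}[f(s, π̂) - f(s,a)], f(s, π̂) = Σ_a π̂(a|s) f(s,a), and T_U^{π̂} f(s,a) = U(s,a) + γ E_{s'∼P(·|s,a)}[f(s', π̂)]. -/

import Mathlib

open Finset

/-- Distribution over state-action pairs at time `t` when running policy `pol`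
from initial state `s0` in the MDP with transition kernel `P`. -/
noncomputable def stepDist {S A : Type*} [Fintype S] [Fintype A] [DecidableEq S]
    (P : S → A → S → ℝ) (pol : S → A → ℝ) (s0 : S) : ℕ → S → A → ℝ
  | 0 => fun s a => (if s = s0 then (1 : ℝ) else 0) * pol s a
  | (t + 1) => fun s a => (∑ s', ∑ a', stepDist P pol s0 t s' a' * P s' a' s) * pol s a

/-- Discounted occupancy measure d^π(s,a) = (1-γ) Σ_t γ^t P^π(s_t=s, a_t=a). -/
noncomputable def occ {S A : Type*} [Fintype S] [Fintype A] [DecidableEq S]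
    (γ : ℝ) (P : S → A → S → ℝ) (pol : S → A → ℝ) (s0 : S) (s : S) (a : A) : ℝ :=
  (1 - γ) * ∑' t : ℕ, γ ^ t * stepDist P pol s0 t s a

/-- Expectation of `h` under the discounted occupancy measure d^π. -/
noncomputable def Eocc {S A : Type*} [Fintype S] [Fintype A] [DecidableEq S]
    (γ : ℝ) (P : S → A → S → ℝ) (pol : S → A → ℝ) (s0 : S) (h : S → A → ℝ) : ℝ :=
  ∑ s, ∑ a, occ γ P pol s0 s a * h s a

/-- f(s, π) = Σ_a π(a|s) f(s,a). -/
def fPol {S A : Type*} [Fintype A] (f : S → A → ℝ) (pol : S → A → ℝ) (s : S) : ℝ :=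
  ∑ a, pol s a * f s a

/-- Bellman operator (T_U^π f)(s,a) = U(s,a) + γ E_{s'~P(·|s,a)}[f(s',π)]. -/
noncomputable def bellman {S A : Type*} [Fintype S] [Fintype A]
    (γ : ℝ) (P : S → A → S → ℝ) (U : S → A → ℝ) (pol : S → A → ℝ) (f : S → A → ℝ)
    (s : S) (a : A) : ℝ :=
  U s a + γ * ∑ s', P s a s' * fPol f pol s'

/-- J_U(π) = (1/(1-γ)) E_{d^π}[U]. -/
noncomputable def Jval {S A : Type*} [Fintype S] [Fintype A] [DecidableEq S]
    (γ : ℝ) (P : S → A → S → ℝ) (pol : S → A → ℝ) (s0 : S) (U : S → A → ℝ) : ℝ :=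
  (1 / (1 - γ)) * Eocc γ P pol s0 U

/-- `P` is a transition kernel (each row a probability distribution). -/
def IsKernel {S A : Type*} [Fintype S] (P : S → A → S → ℝ) : Prop :=
  ∀ s a, (∀ s', 0 ≤ P s a s') ∧ ∑ s', P s a s' = 1

/-- `pol` is a (Markov stationary) policy. -/
def IsPolicy {S A : Type*} [Fintype A] (pol : S → A → ℝ) : Prop :=
  ∀ s, (∀ a, 0 ≤ pol s a) ∧ ∑ a, pol s a = 1

section aux

variable {S A : Type*} [Fintype S] [Fintype A] [DecidableEq S]
variable {γ : ℝ} {P : S → A → S → ℝ} {pol : S → A → ℝ} {s0 : S}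

lemma step_nonneg (hP : IsKernel P) (hpol : IsPolicy pol) :
    ∀ t (s : S) (a : A), 0 ≤ stepDist P pol s0 t s a := by
  intro t
  induction t with
  | zero =>
    intro s a
    simp only [stepDist]
    exact mul_nonneg (by split <;> norm_num) ((hpol s).1 a)
  | succ t ih =>
    intro s a
    simp only [stepDist]
    exact mul_nonneg
      (Finset.sum_nonneg fun s' _ => Finset.sum_nonneg fun a' _ =>
        mul_nonneg (ih s' a') ((hP s' a').1 s)) ((hpol s).1 a)

lemma step_sum (hP : IsKernel P) (hpol : IsPolicy pol) :
    ∀ t, ∑ s : S, ∑ a : A, stepDist P pol s0 t s a = 1 := by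
  intro t
  induction t with
  | zero =>
    simp only [stepDist, ← Finset.mul_sum]
    simp only [(hpol _).2, mul_one]
    simp
  | succ t ih =>
    simp only [stepDist, ← Finset.mul_sum]
    simp only [(hpol _).2, mul_one]
    rw [Finset.sum_comm]
    calc ∑ s' : S, ∑ s : S, ∑ a' : A, stepDist P pol s0 t s' a' * P s' a' s
        = ∑ s' : S, ∑ a' : A, ∑ s : S, stepDist P pol s0 t s' a' * P s' a' s := by
          exact Finset.sum_congr rfl fun s' _ => Finset.sum_comm
      _ = ∑ s' : S, ∑ a' : A, stepDist P pol s0 t s' a' := by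
          refine Finset.sum_congr rfl fun s' _ => Finset.sum_congr rfl fun a' _ => ?_
          rw [← Finset.mul_sum, (hP s' a').2, mul_one]
      _ = 1 := ih

lemma step_le_one (hP : IsKernel P) (hpol : IsPolicy pol) (t : ℕ) (s : S) (a : A) :
    stepDist P pol s0 t s a ≤ 1 := by
  have h := step_sum (s0 := s0) hP hpol t
  calc stepDist P pol s0 t s a
      ≤ ∑ a' : A, stepDist P pol s0 t s a' :=
        Finset.single_le_sum (fun a' _ => step_nonneg hP hpol t s a') (Finset.mem_univ a)
    _ ≤ ∑ s' : S, ∑ a' : A, stepDist P pol s0 t s' a' :=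
        Finset.single_le_sum
          (fun s' _ => Finset.sum_nonneg fun a' _ => step_nonneg hP hpol t s' a')
          (Finset.mem_univ s)
    _ = 1 := h

lemma summable_aux (hγ0 : 0 < γ) (hγ1 : γ < 1) (hP : IsKernel P) (hpol : IsPolicy pol)
    (s : S) (a : A) (c : ℝ) :
    Summable (fun t => γ ^ t * stepDist P pol s0 t s a * c) := by
  apply Summable.of_norm_bounded (g := fun t => γ ^ t * |c|)
  · exact (summable_geometric_of_lt_one hγ0.le hγ1).mul_right _
  · intro t
    rw [Real.norm_eq_abs, abs_mul, abs_mul, abs_pow, abs_of_pos hγ0]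
    have h1 : |stepDist P pol s0 t s a| ≤ 1 :=
      abs_le.2 ⟨by linarith [step_nonneg (s0 := s0) hP hpol t s a], step_le_one hP hpol t s a⟩
    calc γ ^ t * |stepDist P pol s0 t s a| * |c| ≤ γ ^ t * 1 * |c| := by
          apply mul_le_mul_of_nonneg_right _ (abs_nonneg c)
          exact mul_le_mul_of_nonneg_left h1 (by positivity)
      _ = γ ^ t * |c| := by ring

/-- Key rewriting of `Eocc` as a tsum over time. -/
lemma Eocc_eq (hγ0 : 0 < γ) (hγ1 : γ < 1) (hP : IsKernel P) (hpol : IsPolicy pol)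
    (h : S → A → ℝ) :
    Eocc γ P pol s0 h
      = (1 - γ) * ∑' t : ℕ, γ ^ t * ∑ s, ∑ a, stepDist P pol s0 t s a * h s a := by
  unfold Eocc occ
  have key : ∀ (s : S) (a : A), ((1 - γ) * ∑' t : ℕ, γ ^ t * stepDist P pol s0 t s a) * h s a
      = (1 - γ) * ∑' t : ℕ, γ ^ t * stepDist P pol s0 t s a * h s a := by
    intro s a
    rw [mul_assoc, ← tsum_mul_right]
  simp only [key, ← Finset.mul_sum]
  congr 1
  calc ∑ s, ∑ a, ∑' t : ℕ, γ ^ t * stepDist P pol s0 t s a * h s a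
      = ∑' t : ℕ, ∑ s, ∑ a, γ ^ t * stepDist P pol s0 t s a * h s a := by
        rw [Summable.tsum_finsetSum (fun s _ => summable_sum
          (fun a _ => summable_aux hγ0 hγ1 hP hpol s a (h s a)))]
        exact Finset.sum_congr rfl fun s _ =>
          (Summable.tsum_finsetSum (fun a _ => summable_aux hγ0 hγ1 hP hpol s a (h s a))).symm
    _ = ∑' t : ℕ, γ ^ t * ∑ s, ∑ a, stepDist P pol s0 t s a * h s a := by
        refine tsum_congr fun t => ?_
        simp only [Finset.mul_sum, mul_assoc]

lemma summable_F (hγ0 : 0 < γ) (hγ1 : γ < 1) (hP : IsKernel P) (hpol : IsPolicy pol)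
    (h : S → A → ℝ) :
    Summable (fun t => γ ^ t * ∑ s, ∑ a, stepDist P pol s0 t s a * h s a) := by
  apply Summable.of_norm_bounded (g := fun t => γ ^ t * (∑ s, ∑ a, |h s a|))
  · exact (summable_geometric_of_lt_one hγ0.le hγ1).mul_right _
  · intro t
    rw [Real.norm_eq_abs, abs_mul, abs_pow, abs_of_pos hγ0]
    apply mul_le_mul_of_nonneg_left _ (by positivity)
    calc |∑ s, ∑ a, stepDist P pol s0 t s a * h s a|
        ≤ ∑ s, ∑ a, |stepDist P pol s0 t s a * h s a| := by
          refine (Finset.abs_sum_le_sum_abs _ _).trans ?_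
          exact Finset.sum_le_sum fun s _ => Finset.abs_sum_le_sum_abs _ _
      _ ≤ ∑ s, ∑ a, |h s a| := by
          refine Finset.sum_le_sum fun s _ => Finset.sum_le_sum fun a _ => ?_
          rw [abs_mul]
          have h1 : |stepDist P pol s0 t s a| ≤ 1 :=
            abs_le.2 ⟨by linarith [step_nonneg (s0 := s0) hP hpol t s a],
              step_le_one hP hpol t s a⟩
          calc |stepDist P pol s0 t s a| * |h s a| ≤ 1 * |h s a| :=
                mul_le_mul_of_nonneg_right h1 (abs_nonneg _)
            _ = |h s a| := one_mul _

lemma Eocc_sub (γ : ℝ) (P : S → A → S → ℝ) (pol : S → A → ℝ) (s0 : S)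
    (h1 h2 : S → A → ℝ) :
    Eocc γ P pol s0 (fun s a => h1 s a - h2 s a)
      = Eocc γ P pol s0 h1 - Eocc γ P pol s0 h2 := by
  unfold Eocc
  simp only [mul_sub, Finset.sum_sub_distrib]

lemma Eocc_add (γ : ℝ) (P : S → A → S → ℝ) (pol : S → A → ℝ) (s0 : S)
    (h1 h2 : S → A → ℝ) :
    Eocc γ P pol s0 (fun s a => h1 s a + h2 s a)
      = Eocc γ P pol s0 h1 + Eocc γ P pol s0 h2 := by
  unfold Eocc
  simp only [mul_add, Finset.sum_add_distrib]

lemma Eocc_const_mul (γ c : ℝ) (P : S → A → S → ℝ) (pol : S → A → ℝ) (s0 : S)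
    (h : S → A → ℝ) :
    Eocc γ P pol s0 (fun s a => c * h s a) = c * Eocc γ P pol s0 h := by
  unfold Eocc
  simp only [Finset.mul_sum]
  exact Finset.sum_congr rfl fun s _ => Finset.sum_congr rfl fun a _ => by ring

lemma telescope (hγ0 : 0 < γ) (hγ1 : γ < 1) (hP : IsKernel P) (hpol : IsPolicy pol)
    (g : S → ℝ) :
    Eocc γ P pol s0 (fun s _ => g s)
      - γ * Eocc γ P pol s0 (fun s a => ∑ s', P s a s' * g s')
      = (1 - γ) * g s0 := by
  set F : ℕ → ℝ := fun t => ∑ s, ∑ a, stepDist P pol s0 t s a * g s with hFdef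
  have hFG : ∀ t, F (t + 1)
      = ∑ s, ∑ a, stepDist P pol s0 t s a * ∑ s', P s a s' * g s' := by
    intro t
    simp only [hFdef, stepDist]
    calc ∑ s, ∑ a, (∑ s', ∑ a', stepDist P pol s0 t s' a' * P s' a' s) * pol s a * g s
        = ∑ s, (∑ s', ∑ a', stepDist P pol s0 t s' a' * P s' a' s) * g s := by
          refine Finset.sum_congr rfl fun s _ => ?_
          calc ∑ a, (∑ s', ∑ a', stepDist P pol s0 t s' a' * P s' a' s) * pol s a * g s
              = ∑ a, ((∑ s', ∑ a', stepDist P pol s0 t s' a' * P s' a' s) * g s)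
                  * pol s a := Finset.sum_congr rfl fun a _ => by ring
            _ = ((∑ s', ∑ a', stepDist P pol s0 t s' a' * P s' a' s) * g s)
                  * ∑ a, pol s a := by rw [← Finset.mul_sum]
            _ = _ := by rw [(hpol s).2, mul_one]
      _ = ∑ s, ∑ s', ∑ a', stepDist P pol s0 t s' a' * P s' a' s * g s := by
          refine Finset.sum_congr rfl fun s _ => ?_
          simp only [Finset.sum_mul]
      _ = ∑ s', ∑ s, ∑ a', stepDist P pol s0 t s' a' * P s' a' s * g s :=
          Finset.sum_comm
      _ = ∑ s', ∑ a', ∑ s, stepDist P pol s0 t s' a' * P s' a' s * g s :=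
          Finset.sum_congr rfl fun s' _ => Finset.sum_comm
      _ = ∑ s', ∑ a', stepDist P pol s0 t s' a' * ∑ s, P s' a' s * g s := by
          refine Finset.sum_congr rfl fun s' _ => Finset.sum_congr rfl fun a' _ => ?_
          rw [Finset.mul_sum]
          exact Finset.sum_congr rfl fun s _ => by ring
  have hF0 : F 0 = g s0 := by
    simp only [hFdef, stepDist, ite_mul, one_mul, zero_mul]
    have hx : ∀ x : S, (∑ a, if x = s0 then pol x a * g x else 0)
        = if x = s0 then (∑ a, pol x a) * g x else 0 := by
      intro x; split <;> simp [Finset.sum_mul]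
    simp only [hx, (hpol _).2, one_mul, Finset.sum_ite_eq', Finset.mem_univ, if_true]
  have hsum : Summable (fun t => γ ^ t * F t) := summable_F hγ0 hγ1 hP hpol _
  have hshift : ∑' t : ℕ, γ ^ t * F t
      = F 0 + γ * ∑' t : ℕ, γ ^ t * F (t + 1) := by
    rw [Summable.tsum_eq_zero_add hsum]
    congr 1
    · simp
    · rw [← tsum_mul_left]
      exact tsum_congr fun t => by ring
  rw [Eocc_eq hγ0 hγ1 hP hpol, Eocc_eq hγ0 hγ1 hP hpol]
  have h1 : (∑' t : ℕ, γ ^ t * ∑ s, ∑ a, stepDist P pol s0 t s a * g s) = ∑' t : ℕ, γ ^ t * F t := rfl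
  have h2 : (∑' t : ℕ, γ ^ t * ∑ s, ∑ a, stepDist P pol s0 t s a * ∑ s', P s a s' * g s')
      = ∑' t : ℕ, γ ^ t * F (t + 1) := tsum_congr fun t => by rw [hFG t]
  rw [h1, h2, hshift, hF0]
  ring

end aux

/-- generalized performance difference lemma (Lemma A.2). -/
theorem stmt6 {S A : Type*} [Fintype S] [Fintype A] [DecidableEq S]
    (γ : ℝ) (hγ0 : 0 < γ) (hγ1 : γ < 1)
    (P : S → A → S → ℝ) (hP : IsKernel P)
    (pol polhat : S → A → ℝ) (hpol : IsPolicy pol) (hpolhat : IsPolicy polhat)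
    (s0 : S) (U f : S → A → ℝ) :
    (1 - γ) * (fPol f polhat s0 - Jval γ P pol s0 U)
      = Eocc γ P pol s0 (fun s a => fPol f polhat s - f s a)
        + Eocc γ P pol s0 (fun s a => f s a - bellman γ P U polhat f s a) := by
  have hne : (1 : ℝ) - γ ≠ 0 := by linarith
  rw [Eocc_sub, Eocc_sub]
  have hb : Eocc γ P pol s0 (bellman γ P U polhat f)
      = Eocc γ P pol s0 U
        + γ * Eocc γ P pol s0 (fun s a => ∑ s', P s a s' * fPol f polhat s') := by
    unfold bellman
    rw [Eocc_add γ P pol s0 U (fun s a => γ * ∑ s', P s a s' * fPol f polhat s'),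
      Eocc_const_mul]
  have htel := telescope (s0 := s0) hγ0 hγ1 hP hpol (fPol f polhat)
  have hJ : (1 - γ) * Jval γ P pol s0 U = Eocc γ P pol s0 U := by
    unfold Jval; field_simp
  unfold Jval at *
  have hEg : Eocc γ P pol s0 (fun s _ => fPol f polhat s)
      = Eocc γ P pol s0 (fun s a => fPol f polhat s) := rfl
  rw [hEg] at htel
  linarith [hb, htel, hJ]
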